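/- Let X be a finitely generated free abelian group and Γ a commutative group. Then every symmetric bilinear map σ : X × X → Γ is of the form σ(x,y) = α(x+y)·α(x)⁻¹·α(y)⁻¹ for some function α : X → Γ; i.e. the group Σ (symmetric bilinear maps modulo the σ_α) is trivial. Explicitly, choosing a basis e₁,…,eₙ one may take α(Σnᵢeᵢ) = ∏ᵢ σ(eᵢ,eᵢ)^{nᵢ(nᵢ−1)/2} · ∏_{i<j} σ(eᵢ,e_j)^{nᵢn_j}. -/

import Mathlib

theorem tri_add (a b : ℤ) :
    ((a + b) * (a + b - 1)) / 2 - (a * (a - 1)) / 2 - (b * (b - 1)) / 2 = a * b := by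
  obtain ⟨k, hk⟩ : Even (a * (a - 1)) := by
    have := Int.even_mul_succ_self (a - 1)
    simpa [sub_add_cancel, mul_comm] using this
  obtain ⟨l, hl⟩ : Even (b * (b - 1)) := by
    have := Int.even_mul_succ_self (b - 1)
    simpa [sub_add_cancel, mul_comm] using this
  have h3 : (a + b) * (a + b - 1) = 2 * (k + l + a * b) := by linarith [hk, hl]
  rw [h3, hk, hl, show k + k = 2 * k by ring, show l + l = 2 * l by ring,
    Int.mul_ediv_cancel_left _ (by norm_num), Int.mul_ediv_cancel_left _ (by norm_num),
    Int.mul_ediv_cancel_left _ (by norm_num)]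
  ring

theorem mul_shuffle {Γ : Type*} [CommGroup Γ] (a b c d e f : Γ) :
    (a * c⁻¹ * e⁻¹) * (b * d⁻¹ * f⁻¹) = (a * b) * (c * d)⁻¹ * (e * f)⁻¹ := by
  simp only [mul_inv]
  simp only [mul_comm, mul_left_comm, mul_assoc]



/-- Over a finitely generated free abelian group X = ℤⁿ, every
symmetric bilinear σ : X × X → Γ is of the form σ_α, with the explicit
α(Σnᵢeᵢ) = ∏ᵢ σ(eᵢ,eᵢ)^{nᵢ(nᵢ-1)/2} · ∏_{i<j} σ(eᵢ,e_j)^{nᵢn_j}. -/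
theorem stmt_13 {n : ℕ} {Γ : Type*} [CommGroup Γ]
    (σ : (Fin n → ℤ) → (Fin n → ℤ) → Γ)
    (hbil : ∀ x x' y, σ (x + x') y = σ x y * σ x' y)
    (hsym : ∀ x y, σ x y = σ y x)
    (e : Fin n → (Fin n → ℤ)) (he : ∀ i, e i = Pi.single i 1)
    (α : (Fin n → ℤ) → Γ)
    (hα : ∀ x, α x =
      (∏ i : Fin n, (σ (e i) (e i)) ^ ((x i * (x i - 1)) / 2)) *
        ∏ i : Fin n, ∏ j ∈ Finset.Ioi i, (σ (e i) (e j)) ^ (x i * x j)) :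
    ∀ x y, σ x y = α (x + y) * (α x)⁻¹ * (α y)⁻¹ := by
  have hσ0 : ∀ y, σ 0 y = 1 := by
    intro y
    have h := hbil 0 0 y
    rw [add_zero] at h
    exact (left_eq_mul.mp h).symm ▸ rfl
  have key : ∀ x y, σ x y = ∏ i, σ (e i) y ^ (x i) := by
    intro x y
    let F : (Fin n → ℤ) →+ Additive Γ :=
      { toFun := fun x => Additive.ofMul (σ x y)
        map_zero' := by simp [hσ0 y]
        map_add' := fun a b => by simpa using congrArg Additive.ofMul (hbil a b y) }
    have hx : x = ∑ i, (x i) • e i := by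
      simp only [he]
      have h4 : ∀ i, (x i) • (Pi.single i 1 : Fin n → ℤ) = Pi.single i (x i) := by
        intro i; funext k; simp [Pi.single_apply]
      simp only [h4, Finset.univ_sum_single]
    have h1 : F x = ∑ i, x i • F (e i) := by
      conv_lhs => rw [hx]
      rw [map_sum]
      exact Finset.sum_congr rfl fun i _ => map_zsmul F (x i) (e i)
    simpa [F] using congrArg Additive.toMul h1
  intro x y
  -- full expansion of σ x y
  have expand : σ x y = ∏ i, ∏ j, σ (e i) (e j) ^ (x i * y j) := by
    rw [key x y]
    refine Finset.prod_congr rfl fun i _ => ?_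
    rw [hsym (e i) y, key y (e i), ← Finset.prod_zpow]
    refine Finset.prod_congr rfl fun j _ => ?_
    rw [← zpow_mul, hsym (e j) (e i), mul_comm]
  -- splitting of the double product
  have hdisj : ∀ i : Fin n, Disjoint (Finset.Iio i) (Finset.Ioi i) := by
    intro i
    rw [Finset.disjoint_left]
    intro a ha hb
    simp only [Finset.mem_Iio] at ha
    simp only [Finset.mem_Ioi] at hb
    exact absurd (ha.trans hb) (lt_irrefl a)
  have huniv : ∀ i : Fin n,
      (Finset.univ : Finset (Fin n)) = insert i (Finset.Iio i ∪ Finset.Ioi i) := by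
    intro i
    ext j
    simp only [Finset.mem_univ, Finset.mem_insert, Finset.mem_union, Finset.mem_Iio,
      Finset.mem_Ioi, true_iff]
    rcases lt_trichotomy j i with h | h | h
    · exact Or.inr (Or.inl h)
    · exact Or.inl h
    · exact Or.inr (Or.inr h)
  have split : ∀ (f : Fin n → Fin n → Γ), (∏ i, ∏ j, f i j) =
      (∏ i, f i i) * ((∏ i, ∏ j ∈ Finset.Ioi i, f i j) *
        ∏ i, ∏ j ∈ Finset.Ioi i, f j i) := by
    intro f
    have h1 : ∀ i : Fin n, ∏ j, f i j =
        f i i * ((∏ j ∈ Finset.Ioi i, f i j) * ∏ j ∈ Finset.Iio i, f i j) := by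
      intro i
      rw [huniv i, Finset.prod_insert (by simp), Finset.prod_union (hdisj i),
        mul_comm (∏ j ∈ Finset.Iio i, f i j)]
    rw [Finset.prod_congr rfl fun i _ => h1 i, Finset.prod_mul_distrib,
      Finset.prod_mul_distrib]
    congr 2
    exact Finset.prod_comm' (by intro a b; simp [and_comm])
  set g : Fin n → Fin n → Γ := fun i j => σ (e i) (e j) with hg
  have diag : (∏ i, g i i ^ (x i * y i)) =
      (∏ i, g i i ^ ((x + y) i * ((x + y) i - 1) / 2)) *
        (∏ i, g i i ^ (x i * (x i - 1) / 2))⁻¹ *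
        (∏ i, g i i ^ (y i * (y i - 1) / 2))⁻¹ := by
    rw [← Finset.prod_inv_distrib, ← Finset.prod_inv_distrib,
      ← Finset.prod_mul_distrib, ← Finset.prod_mul_distrib]
    refine Finset.prod_congr rfl fun i _ => ?_
    rw [← zpow_neg, ← zpow_neg, ← zpow_add, ← zpow_add]
    congr 1
    simp only [Pi.add_apply]
    linarith [tri_add (x i) (y i)]
  have offdiag : (∏ i, ∏ j ∈ Finset.Ioi i, (g i j ^ (x i * y j) * g j i ^ (x j * y i))) =
      (∏ i, ∏ j ∈ Finset.Ioi i, g i j ^ ((x + y) i * (x + y) j)) *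
        (∏ i, ∏ j ∈ Finset.Ioi i, g i j ^ (x i * x j))⁻¹ *
        (∏ i, ∏ j ∈ Finset.Ioi i, g i j ^ (y i * y j))⁻¹ := by
    simp only [← Finset.prod_inv_distrib, ← Finset.prod_mul_distrib]
    refine Finset.prod_congr rfl fun i _ => Finset.prod_congr rfl fun j _ => ?_
    have hgs : g j i = g i j := hsym (e j) (e i)
    rw [hgs, ← zpow_add, ← zpow_neg, ← zpow_neg, ← zpow_add, ← zpow_add]
    congr 1
    simp only [Pi.add_apply]
    ring
  calc σ x y
      = (∏ i, g i i ^ (x i * y i)) *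
          (∏ i, ∏ j ∈ Finset.Ioi i, (g i j ^ (x i * y j) * g j i ^ (x j * y i))) := by
        rw [expand, split (fun i j => g i j ^ (x i * y j))]
        congr 1
        rw [← Finset.prod_mul_distrib]
        exact Finset.prod_congr rfl fun i _ => (Finset.prod_mul_distrib).symm
    _ = α (x + y) * (α x)⁻¹ * (α y)⁻¹ := by
        rw [diag, offdiag, hα, hα, hα]
        exact mul_shuffle _ _ _ _ _ _
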